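/- Let σ0 > 0, ᾱ ∈ (0,1), σ_t = √(ᾱ σ0² + (1 − ᾱ)), and P ≥ 0. Consider the minimization, over pairs (a, σ̂) ∈ ℝ × [0,∞) subject to a² σ_t² ≤ σ̂² and (σ0 − σ̂)² ≤ P, of the objective σ0² + σ̂² − 2 a √ᾱ σ0². Its minimum value equals (1 − ᾱ) σ0²/σ_t² + ( σ0 − √P − √ᾱ σ0²/σ_t )² if √P < σ0 − √ᾱ σ0²/σ_t, and equals (1 − ᾱ) σ0²/σ_t² if √P ≥ σ0 − √ᾱ σ0²/σ_t. (This is the optimal distortion–perception tradeoff D_t(P) for a scalar Gaussian source observed through AWGN, under mean-square distortion and squared Wasserstein-2 perception constraint, after reduction to jointly Gaussian estimators.) -/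

import Mathlib

/-- The optimal distortion–perception tradeoff `D_t(P)` for a scalar Gaussian source
observed through AWGN, after reduction to jointly Gaussian (linear) estimators:
minimize `σ0² + σ̂² − 2a√ᾱσ0²` over `(a, σ̂) ∈ ℝ × [0,∞)` with `a²σ_t² ≤ σ̂²` and
`(σ0 − σ̂)² ≤ P`. -/
theorem stmt_9 (σ0 ab P : ℝ) (hσ0 : 0 < σ0) (hab : ab ∈ Set.Ioo (0:ℝ) 1) (hP : 0 ≤ P)
    (σt : ℝ) (hσt : σt = Real.sqrt (ab * σ0 ^ 2 + (1 - ab))) :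
    (Real.sqrt P < σ0 - Real.sqrt ab * σ0 ^ 2 / σt →
      IsLeast
        {y : ℝ | ∃ a σh : ℝ, 0 ≤ σh ∧ a ^ 2 * σt ^ 2 ≤ σh ^ 2 ∧ (σ0 - σh) ^ 2 ≤ P ∧
          y = σ0 ^ 2 + σh ^ 2 - 2 * a * Real.sqrt ab * σ0 ^ 2}
        ((1 - ab) * σ0 ^ 2 / σt ^ 2 +
          (σ0 - Real.sqrt P - Real.sqrt ab * σ0 ^ 2 / σt) ^ 2)) ∧
    (σ0 - Real.sqrt ab * σ0 ^ 2 / σt ≤ Real.sqrt P →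
      IsLeast
        {y : ℝ | ∃ a σh : ℝ, 0 ≤ σh ∧ a ^ 2 * σt ^ 2 ≤ σh ^ 2 ∧ (σ0 - σh) ^ 2 ≤ P ∧
          y = σ0 ^ 2 + σh ^ 2 - 2 * a * Real.sqrt ab * σ0 ^ 2}
        ((1 - ab) * σ0 ^ 2 / σt ^ 2)) := by
  obtain ⟨hα1, hα2⟩ := hab
  have hpos : (0:ℝ) < ab * σ0 ^ 2 + (1 - ab) := by nlinarith [sq_nonneg σ0]
  have hσtpos : 0 < σt := by rw [hσt]; exact Real.sqrt_pos.mpr hpos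
  have hσt2 : σt ^ 2 = ab * σ0 ^ 2 + (1 - ab) := by
    rw [hσt, Real.sq_sqrt hpos.le]
  have hsa : 0 < Real.sqrt ab := Real.sqrt_pos.mpr hα1
  have hsa2 : Real.sqrt ab ^ 2 = ab := Real.sq_sqrt hα1.le
  set s := Real.sqrt ab * σ0 ^ 2 / σt with hs
  have hspos : 0 < s := by positivity
  have h4 : (Real.sqrt ab * σ0 ^ 2) ^ 2 = ab * σ0 ^ 2 * σ0 ^ 2 := by
    rw [mul_pow, hsa2]; ring
  have hkey : σ0 ^ 2 - s ^ 2 = (1 - ab) * σ0 ^ 2 / σt ^ 2 := by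
    rw [hs, div_pow, mul_pow, hsa2, sub_eq_iff_eq_add, ← add_div, eq_div_iff (by positivity)]
    linear_combination σ0 ^ 2 * hσt2
  have hgt : Real.sqrt ab * σ0 < σt := by
    have h5 : Real.sqrt (ab * σ0 ^ 2) < Real.sqrt (ab * σ0 ^ 2 + (1 - ab)) :=
      Real.sqrt_lt_sqrt (by positivity) (by linarith)
    rwa [Real.sqrt_mul hα1.le, Real.sqrt_sq hσ0.le, ← hσt] at h5
  have hslt : s < σ0 := by
    rw [hs, div_lt_iff₀ hσtpos]
    nlinarith [hgt, hσ0]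
  have hsP : 0 ≤ Real.sqrt P := Real.sqrt_nonneg P
  have hP2 : Real.sqrt P ^ 2 = P := Real.sq_sqrt hP
  -- lower bound lemma
  have hlow : ∀ a σh : ℝ, 0 ≤ σh → a ^ 2 * σt ^ 2 ≤ σh ^ 2 →
      (σh - s) ^ 2 + (σ0 ^ 2 - s ^ 2) ≤ σ0 ^ 2 + σh ^ 2 - 2 * a * Real.sqrt ab * σ0 ^ 2 := by
    intro a σh hσh hcon
    have hat : a * σt ≤ σh := by
      by_contra h
      push_neg at h
      nlinarith
    have h1 : a * Real.sqrt ab * σ0 ^ 2 ≤ σh * s := by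
      have := mul_le_mul_of_nonneg_right hat hspos.le
      calc a * Real.sqrt ab * σ0 ^ 2 = (a * σt) * s := by
            rw [hs]; field_simp
        _ ≤ σh * s := this
    nlinarith
  constructor
  · intro h1
    have hσhpos : 0 ≤ σ0 - Real.sqrt P := by linarith
    constructor
    · refine ⟨(σ0 - Real.sqrt P) / σt, σ0 - Real.sqrt P, hσhpos, ?_, ?_, ?_⟩
      · rw [div_pow, div_mul_cancel₀]
        positivity
      · simp [hP2]
      · have : 2 * ((σ0 - Real.sqrt P) / σt) * Real.sqrt ab * σ0 ^ 2
            = 2 * (σ0 - Real.sqrt P) * s := by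
          rw [hs]; field_simp
        rw [this, ← hkey, hs]
        ring
    · rintro y ⟨a, σh, hσh, hcon, hper, rfl⟩
      have hlb := hlow a σh hσh hcon
      have hge : σ0 - Real.sqrt P ≤ σh := by
        rcases le_or_gt σh σ0 with hcase | hcase
        · have h6 := Real.sqrt_le_sqrt hper
          rw [Real.sqrt_sq (by linarith)] at h6
          linarith
        · linarith
      have h2 : (σ0 - Real.sqrt P - s) ^ 2 ≤ (σh - s) ^ 2 :=
        pow_le_pow_left₀ (by linarith) (by linarith) 2
      rw [← hkey]
      linarith
  · intro h1
    constructor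
    · refine ⟨s / σt, s, hspos.le, ?_, ?_, ?_⟩
      · rw [div_pow, div_mul_cancel₀]
        positivity
      · nlinarith
      · have : 2 * (s / σt) * Real.sqrt ab * σ0 ^ 2 = 2 * s ^ 2 := by
          rw [hs]; field_simp
        rw [this, ← hkey]
        ring
    · rintro y ⟨a, σh, hσh, hcon, hper, rfl⟩
      have hlb := hlow a σh hσh hcon
      rw [← hkey]
      linarith [sq_nonneg (σh - s)]
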